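/- Every set of reals with the Rothberger property S1(O,O) is countable if and only if every strong measure zero set of reals is countable. -/

import Mathlib

open Filter Set Cardinal

/-- The Rothberger property `S1(O,O)`: for every sequence of open covers one can select one
member from each so that the selections form a cover. -/
def RothbergerProp (X : Type*) [TopologicalSpace X] : Prop :=
  ∀ U : ℕ → Set (Set X),
    (∀ n, (∀ s ∈ U n, IsOpen s) ∧ ⋃₀ U n = Set.univ) →
    ∃ f : ℕ → Set X, (∀ n, f n ∈ U n) ∧ (⋃ n, f n) = Set.univ

/-- The Hurewicz property `Ufin(O,Γ)`: for every sequence of open covers one can select finite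
subfamilies whose unions form a γ-cover (every point is in all but finitely many of them). -/
def HurewiczProp (X : Type*) [TopologicalSpace X] : Prop :=
  ∀ U : ℕ → Set (Set X),
    (∀ n, (∀ s ∈ U n, IsOpen s) ∧ ⋃₀ U n = Set.univ) →
    ∃ F : ℕ → Set (Set X), (∀ n, F n ⊆ U n ∧ (F n).Finite) ∧
      ∀ x : X, ∀ᶠ n in atTop, x ∈ ⋃₀ F n

/-- The Menger property `Ufin(O,O)`. -/
def MengerProp (X : Type*) [TopologicalSpace X] : Prop :=
  ∀ U : ℕ → Set (Set X),
    (∀ n, (∀ s ∈ U n, IsOpen s) ∧ ⋃₀ U n = Set.univ) →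
    ∃ F : ℕ → Set (Set X), (∀ n, F n ⊆ U n ∧ (F n).Finite) ∧
      (⋃ n, ⋃₀ F n) = Set.univ

/-- The Gerlits–Nagy property `(*)_GN` = Rothberger + Hurewicz
(Kočinac–Scheepers characterization). -/
def GerlitsNagy (X : Type*) [TopologicalSpace X] : Prop :=
  RothbergerProp X ∧ HurewiczProp X

/-- Strong measure zero: for every sequence of positive reals `ε n` there is a cover
`A n` with `diam (A n) < ε n`. -/
def StrongMeasureZero (X : Type*) [PseudoMetricSpace X] : Prop :=
  ∀ ε : ℕ → ℝ, (∀ n, 0 < ε n) →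
    ∃ A : ℕ → Set X, (⋃ n, A n) = Set.univ ∧ ∀ n, EMetric.diam (A n) < ENNReal.ofReal (ε n)

/-- The bounding number `b`: least cardinality of an unbounded family in `(ℕ → ℕ, ≤*)`. -/
noncomputable def boundingNumber : Cardinal :=
  sInf { c : Cardinal | ∃ F : Set (ℕ → ℕ), #F = c ∧
    ∀ g : ℕ → ℕ, ∃ f ∈ F, ¬ ∀ᶠ n in atTop, f n ≤ g n }

/-- `cov(M)`: least cardinality of a family of meager sets of reals covering `ℝ`. -/
noncomputable def covMeager : Cardinal :=
  sInf { c : Cardinal | ∃ S : Set (Set ℝ), #S = c ∧ (∀ A ∈ S, IsMeagre A) ∧ ⋃₀ S = Set.univ }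

/-- `add(M)`: least cardinality of a family of meager sets of reals whose union is not meager. -/
noncomputable def addMeager : Cardinal :=
  sInf { c : Cardinal | ∃ S : Set (Set ℝ), #S = c ∧ (∀ A ∈ S, IsMeagre A) ∧ ¬ IsMeagre (⋃₀ S) }

/-- An ω-cover: `Set.univ ∉ U` and every finite set is contained in some member of `U`. -/
def IsOmegaCover {X : Type*} (U : Set (Set X)) : Prop :=
  Set.univ ∉ U ∧ ∀ F : Set X, F.Finite → ∃ u ∈ U, F ⊆ u

/-- A γ-cover: an infinite family such that every point belongs to all but finitely many members. -/
def IsGammaCover {X : Type*} (U : Set (Set X)) : Prop :=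
  U.Infinite ∧ ∀ x : X, {u ∈ U | x ∉ u}.Finite

/-- A family `U` is groupable (`U ∈ Ω^gp`) if it admits a partition into finite sets such that
every finite `F ⊆ X` is contained in a member of all but finitely many pieces. -/
def IsGroupable {X : Type*} (U : Set (Set X)) : Prop :=
  ∃ P : Set (Set (Set X)),
    (∀ G ∈ P, G.Finite ∧ G.Nonempty) ∧ P.PairwiseDisjoint id ∧ ⋃₀ P = U ∧
    ∀ F : Set X, F.Finite → {G ∈ P | ¬ ∃ u ∈ G, F ⊆ u}.Finite

/-- The selection property `S1(Ω, Ω^gp)`. -/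
def S1OmegaOmegaGp (X : Type*) [TopologicalSpace X] : Prop :=
  ∀ U : ℕ → Set (Set X),
    (∀ n, (∀ s ∈ U n, IsOpen s) ∧ IsOmegaCover (U n)) →
    ∃ f : ℕ → Set X, (∀ n, f n ∈ U n) ∧
      IsOmegaCover (Set.range f) ∧ IsGroupable (Set.range f)

/-- A γ-set: every open ω-cover contains a γ-subcover. -/
def IsGammaSet (X : Type*) [TopologicalSpace X] : Prop :=
  ∀ U : Set (Set X), (∀ s ∈ U, IsOpen s) → IsOmegaCover U →
    ∃ V ⊆ U, IsGammaCover V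

namespace BC13

noncomputable def w (n : ℕ) : ℝ := 2/3^(n+1)

lemma w_pos (n : ℕ) : 0 < w n := by unfold w; positivity

lemma w_eq : w = fun n => (2/3) * (1/3:ℝ)^n := by
  funext n; simp only [w, pow_succ, one_div, inv_pow]; field_simp

lemma summable_w : Summable w := by
  rw [w_eq]
  exact (summable_geometric_of_lt_one (by norm_num) (by norm_num)).mul_left _

lemma tsum_w : ∑' n, w n = 1 := by
  rw [w_eq, tsum_mul_left, tsum_geometric_of_lt_one (by norm_num) (by norm_num)]
  norm_num

noncomputable def E (S : Set ℕ) : ℝ := ∑' n, S.indicator w n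

lemma indicator_le_w (S : Set ℕ) (n : ℕ) : S.indicator w n ≤ w n := by
  by_cases h : n ∈ S <;> simp [Set.indicator_of_mem, Set.indicator_of_notMem, h, (w_pos n).le]

lemma summable_E (S : Set ℕ) : Summable (S.indicator w) := summable_w.indicator S

lemma E_nonneg (S : Set ℕ) : 0 ≤ E S :=
  tsum_nonneg fun n => Set.indicator_nonneg (fun i _ => (w_pos i).le) n

lemma E_mono {S T : Set ℕ} (h : S ⊆ T) : E S ≤ E T :=
  Summable.tsum_le_tsum (fun n => Set.indicator_le_indicator_of_subset h (fun i => (w_pos i).le) n)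
    (summable_E S) (summable_E T)

lemma E_union {S T : Set ℕ} (h : Disjoint S T) : E (S ∪ T) = E S + E T := by
  unfold E
  rw [← Summable.tsum_add (summable_E S) (summable_E T)]
  congr 1
  funext n
  rw [Set.indicator_union_of_disjoint h]

lemma E_le_one (S : Set ℕ) : E S ≤ 1 := by
  calc E S ≤ ∑' n, w n :=
        Summable.tsum_le_tsum (indicator_le_w S) (summable_E S) summable_w
    _ = 1 := tsum_w

lemma E_singleton_subset {S : Set ℕ} {m : ℕ} (h : S ⊆ {m}) : E S ≤ w m := by
  have hb : ∀ n, S.indicator w n ≤ (if n = m then w m else 0) := by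
    intro n
    by_cases hn : n ∈ S
    · have : n = m := h hn
      subst this
      simp [Set.indicator_of_mem hn]
    · simp only [Set.indicator_of_notMem hn]
      split <;> [exact (w_pos m).le; exact le_refl 0]
  calc E S ≤ ∑' n, (if n = m then w m else 0) :=
        Summable.tsum_le_tsum hb (summable_E S) ⟨_, hasSum_ite_eq m (w m)⟩
    _ = w m := tsum_ite_eq m (fun _ => w m)

lemma E_singleton (m : ℕ) : E {m} = w m := by
  have : ({m} : Set ℕ).indicator w = fun n => if n = m then w m else 0 := by
    funext n
    by_cases h : n = m
    · subst h; simp [Set.indicator_of_mem]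
    · simp [Set.indicator_of_notMem, h]
  rw [E, this]
  exact tsum_ite_eq m (fun _ => w m)

lemma E_Ici (m : ℕ) : E (Set.Ici m) = (1/3:ℝ)^m := by
  induction m with
  | zero =>
    have : (Set.Ici 0 : Set ℕ) = Set.univ := by ext n; simp
    rw [this]
    have : (Set.univ : Set ℕ).indicator w = w := by funext n; simp
    rw [E, this, tsum_w]; norm_num
  | succ m ih =>
    have hsplit : (Set.Ici m : Set ℕ) = {m} ∪ Set.Ici (m+1) := by
      ext n; simp only [Set.mem_Ici, Set.mem_union, Set.mem_singleton_iff]; omega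
    have hd : Disjoint ({m} : Set ℕ) (Set.Ici (m+1)) := by
      rw [Set.disjoint_left]; rintro n h1 h2
      rw [Set.mem_singleton_iff] at h1; rw [Set.mem_Ici] at h2; omega
    have h1 : (1/3:ℝ)^m = w m + E (Set.Ici (m+1)) := by
      rw [← ih, hsplit, E_union hd, E_singleton]
    have hw : w m = 2 * (1/3:ℝ)^(m+1) := by rw [w_eq]; ring
    rw [hw] at h1
    rw [pow_succ] at h1 ⊢
    linarith

lemma E_tail (m : ℕ) (S : Set ℕ) : E (S ∩ Set.Ici m) ≤ (1/3:ℝ)^m := by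
  rw [← E_Ici m]
  exact E_mono Set.inter_subset_right

lemma E_split (S : Set ℕ) (m : ℕ) : E S = E (S ∩ Set.Iio m) + E (S ∩ Set.Ici m) := by
  rw [← E_union (Set.disjoint_left.mpr ?_)]
  · congr 1
    rw [← Set.inter_union_distrib_left, Set.Iio_union_Ici, Set.inter_univ]
  · rintro n ⟨_, h1⟩ ⟨_, h2⟩
    rw [Set.mem_Iio] at h1
    rw [Set.mem_Ici] at h2
    omega

lemma E_approx {S S' : Set ℕ} {m : ℕ} (h : S ∩ Set.Iio m = S' ∩ Set.Iio m) :
    |E S - E S'| ≤ (1/3:ℝ)^m := by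
  have h1 := E_split S m
  have h2 := E_split S' m
  have : E S - E S' = E (S ∩ Set.Ici m) - E (S' ∩ Set.Ici m) := by
    rw [h1, h2, h]; ring
  rw [this, abs_le]
  constructor
  · nlinarith [E_tail m S', E_nonneg (S ∩ Set.Ici m), pow_pos (by norm_num : (0:ℝ) < 1/3) m]
  · nlinarith [E_tail m S, E_nonneg (S' ∩ Set.Ici m)]

lemma E_injective : Function.Injective E := by
  have key : ∀ S S' : Set ℕ, ∀ m, m ∈ S → m ∉ S' → S ∩ Set.Iio m = S' ∩ Set.Iio m →
      E S' < E S := by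
    intro S S' m hm hm' heq
    have h1 := E_split S m
    have h2 := E_split S' m
    have hS : w m ≤ E (S ∩ Set.Ici m) := by
      have := Summable.le_tsum (summable_E (S ∩ Set.Ici m)) m
        (fun i _ => Set.indicator_nonneg (fun j _ => (w_pos j).le) i)
      rwa [Set.indicator_of_mem (Set.mem_inter hm (Set.mem_Ici.mpr le_rfl))] at this
    have hS' : E (S' ∩ Set.Ici m) ≤ (1/3:ℝ)^(m+1) := by
      have : S' ∩ Set.Ici m = S' ∩ Set.Ici (m+1) := by
        ext n
        simp only [Set.mem_inter_iff, Set.mem_Ici]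
        constructor
        · rintro ⟨hn, hge⟩
          rcases eq_or_lt_of_le hge with h | h
          · exact absurd (h ▸ hn) hm'
          · exact ⟨hn, h⟩
        · rintro ⟨hn, hge⟩; exact ⟨hn, by omega⟩
      rw [this]; exact E_tail (m+1) S'
    have hw : (1/3:ℝ)^(m+1) < w m := by
      rw [w_eq]
      simp only [one_div, pow_succ]
      rw [inv_pow]
      nlinarith [pow_pos (by norm_num : (0:ℝ) < 3) m, pow_pos (by norm_num : (0:ℝ) < 3⁻¹) m,
        inv_pos.mpr (pow_pos (by norm_num : (0:ℝ) < 3) m)]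
    rw [h1, h2, heq]
    have := hS'.trans_lt (hw.trans_le hS)
    linarith
  intro S S' hE
  by_contra hne
  classical
  have hex : ∃ n, ¬ ((n ∈ S) ↔ (n ∈ S')) := by
    by_contra hall
    push_neg at hall
    exact hne (Set.ext fun n => hall n)
  set m := Nat.find hex with hm
  have hspec := Nat.find_spec hex
  have hmin : ∀ k < m, ((k ∈ S) ↔ (k ∈ S')) := by
    intro k hk
    by_contra hbad
    exact absurd hk (not_lt.mpr (Nat.find_min' hex hbad))
  have heq : S ∩ Set.Iio m = S' ∩ Set.Iio m := by
    ext n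
    simp only [Set.mem_inter_iff, Set.mem_Iio]
    constructor
    · rintro ⟨h1, h2⟩; exact ⟨(hmin n h2).mp h1, h2⟩
    · rintro ⟨h1, h2⟩; exact ⟨(hmin n h2).mpr h1, h2⟩
  by_cases hS : m ∈ S
  · have hS' : m ∉ S' := fun h => hspec ⟨fun _ => h, fun _ => hS⟩
    exact absurd hE (ne_of_gt (key S S' m hS hS' heq))
  · have hS' : m ∈ S' := by
      by_contra h
      exact hspec ⟨fun h1 => absurd h1 hS, fun h1 => absurd h1 h⟩
    exact absurd hE (ne_of_lt (key S' S m hS' hS heq.symm))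


/-- set version of SMZ -/
def SetSMZ (X : Set ℝ) : Prop :=
  ∀ ε : ℕ → ℝ, (∀ n, 0 < ε n) →
    ∃ A : ℕ → Set ℝ, (X ⊆ ⋃ n, A n) ∧ ∀ n, EMetric.diam (A n) < ENNReal.ofReal (ε n)

lemma setSMZ_of_smz {X : Set ℝ} (h : StrongMeasureZero ↥X) : SetSMZ X := by
  intro ε hε
  obtain ⟨A, hcov, hdiam⟩ := h ε hε
  refine ⟨fun n => Subtype.val '' A n, ?_, ?_⟩
  · intro x hx
    have : (⟨x, hx⟩ : ↥X) ∈ ⋃ n, A n := hcov ▸ Set.mem_univ _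
    obtain ⟨n, hn⟩ := Set.mem_iUnion.mp this
    exact Set.mem_iUnion.mpr ⟨n, Set.mem_image_of_mem _ hn⟩
  · intro n
    exact (isometry_subtype_coe.ediam_image (A n)).trans_lt (hdiam n)

lemma setSMZ_mono {X Y : Set ℝ} (h : SetSMZ X) (hYX : Y ⊆ X) : SetSMZ Y := by
  intro ε hε
  obtain ⟨A, hcov, hdiam⟩ := h ε hε
  exact ⟨A, hYX.trans hcov, hdiam⟩

lemma smz_of_rothberger {X : Set ℝ} (h : RothbergerProp ↥X) : StrongMeasureZero ↥X := by
  intro ε hε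
  set U : ℕ → Set (Set ↥X) := fun n =>
    {s | IsOpen s ∧ EMetric.diam s < ENNReal.ofReal (ε n)} with hU
  have hcov : ∀ n, (∀ s ∈ U n, IsOpen s) ∧ ⋃₀ U n = Set.univ := by
    intro n
    refine ⟨fun s hs => hs.1, ?_⟩
    apply Set.eq_univ_of_forall
    intro x
    refine Set.mem_sUnion.mpr ⟨Metric.ball x (ε n / 3), ⟨Metric.isOpen_ball, ?_⟩, ?_⟩
    · have h1 : Metric.ball x (ε n / 3) = EMetric.ball x (ENNReal.ofReal (ε n / 3)) :=
        (Metric.emetric_ball).symm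
      have h2 : EMetric.diam (EMetric.ball x (ENNReal.ofReal (ε n / 3)))
          ≤ 2 * ENNReal.ofReal (ε n / 3) := EMetric.diam_ball
      rw [h1]
      refine h2.trans_lt ?_
      have h3 : (2 : ENNReal) * ENNReal.ofReal (ε n / 3) = ENNReal.ofReal (2 * (ε n / 3)) := by
        rw [ENNReal.ofReal_mul (by norm_num : (0:ℝ) ≤ 2)]
        norm_num
      rw [h3, ENNReal.ofReal_lt_ofReal_iff (hε n)]
      linarith [hε n]
    · exact Metric.mem_ball_self (by linarith [hε n])
  obtain ⟨f, hfU, hfcov⟩ := h U hcov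
  exact ⟨f, hfcov, fun n => (hfU n).2⟩

/-- lifting relatively open sets -/
lemma exists_lift {X : Set ℝ} {s : Set ↥X} (h : IsOpen s) :
    ∃ t : Set ℝ, IsOpen t ∧ Subtype.val ⁻¹' t = s := by
  rw [isOpen_induced_iff] at h
  exact h

/-- a countable set is contained in the range of some sequence, provided the type is nonempty -/
lemma countable_sub_range {α : Type*} [Nonempty α] {s : Set α} (h : s.Countable) :
    ∃ f : ℕ → α, s ⊆ Set.range f := by
  rcases Set.eq_empty_or_nonempty s with rfl | hne
  · exact ⟨fun _ => Classical.arbitrary α, by simp⟩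
  · obtain ⟨f, hf⟩ := Set.Countable.exists_eq_range h hne
    exact ⟨f, hf.le⟩


/-- A second-countable space in which every family of functions indexed by the space is
eventually dominated has the Hurewicz property. -/
lemma hurewicz_of_dominated (X : Type*) [TopologicalSpace X]
    [SecondCountableTopology X]
    (hdom : ∀ g : X → (ℕ → ℕ), ∃ g₀ : ℕ → ℕ, ∀ y : X, ∀ᶠ n in atTop, g y n ≤ g₀ n) :
    HurewiczProp X := by
  classical
  intro U hU
  rcases isEmpty_or_nonempty X with hX | hX
  · refine ⟨fun _ => ∅, fun n => ⟨Set.empty_subset _, Set.finite_empty⟩, fun x => (hX.false x).elim⟩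
  -- countable subcover for each n
  have hsub : ∀ n, ∃ u : ℕ → Set X, (∀ k, u k ∈ U n) ∧ (⋃ k, u k) = Set.univ := by
    intro n
    obtain ⟨T, hTc, hTU⟩ := TopologicalSpace.isOpen_iUnion_countable
      (fun s : ↥(U n) => (s : Set X)) (fun s => (hU n).1 s s.2)
    have huniv : ⋃ s : ↥(U n), (s : Set X) = Set.univ := by
      rw [← (hU n).2]
      ext x
      simp [Set.mem_sUnion]
    have hTne : T.Nonempty := by
      rcases Set.eq_empty_or_nonempty T with rfl | h
      · exfalso
        rw [huniv] at hTU
        simp only [Set.mem_empty_iff_false, Set.iUnion_of_empty, Set.iUnion_empty] at hTU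
        exact (Set.univ_nonempty (α := X)).ne_empty hTU.symm
      · exact h
    obtain ⟨v, hv⟩ := Set.Countable.exists_eq_range hTc hTne
    refine ⟨fun k => ((v k : ↥(U n)) : Set X), fun k => (v k).2, ?_⟩
    rw [← huniv, ← hTU, hv]
    ext x
    simp only [Set.mem_iUnion]
    constructor
    · rintro ⟨k, hk⟩; exact ⟨v k, ⟨k, rfl⟩, hk⟩
    · rintro ⟨s, ⟨k, rfl⟩, hk⟩; exact ⟨k, hk⟩
  choose u hu hucov using hsub
  -- the functions to dominate
  have hg : ∀ (y : X) (n : ℕ), ∃ k, y ∈ u n k := by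
    intro y n
    have : y ∈ ⋃ k, u n k := (hucov n) ▸ Set.mem_univ y
    exact Set.mem_iUnion.mp this
  set g : X → ℕ → ℕ := fun y n => Nat.find (hg y n) with hgdef
  obtain ⟨g₀, hg₀⟩ := hdom g
  refine ⟨fun n => u n '' Set.Iic (g₀ n), fun n =>
    ⟨by rintro s ⟨k, _, rfl⟩; exact hu n k, (Set.finite_Iic _).image _⟩, ?_⟩
  intro y
  filter_upwards [hg₀ y] with n hn
  exact Set.mem_sUnion.mpr ⟨u n (g y n), ⟨g y n, Set.mem_Iic.mpr hn, rfl⟩, Nat.find_spec (hg y n)⟩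


lemma domEx (s : Set (ℕ → ℕ)) (hs : s.Countable) :
    ∃ g : ℕ → ℕ, StrictMono g ∧ ∀ f ∈ s, ∀ᶠ n in atTop, f n < g n := by
  classical
  rcases Set.eq_empty_or_nonempty s with rfl | hne
  · exact ⟨id, strictMono_id, by simp⟩
  obtain ⟨u, hu⟩ := hs.exists_eq_range hne
  set g0 : ℕ → ℕ := fun n => (Finset.range (n+1)).sup (fun i => u i n) + 1 with hg0
  set g : ℕ → ℕ := fun n => (Finset.range (n+1)).sup g0 + n with hg
  have hgs : StrictMono g := by
    apply strictMono_nat_of_lt_succ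
    intro n
    have hsub : (Finset.range (n+1)).sup g0 ≤ (Finset.range (n+1+1)).sup g0 :=
      Finset.sup_mono (Finset.range_subset_range.mpr (Nat.le_succ _))
    have e1 : g n = (Finset.range (n+1)).sup g0 + n := rfl
    have e2 : g (n+1) = (Finset.range (n+1+1)).sup g0 + (n+1) := rfl
    omega
  refine ⟨g, hgs, ?_⟩
  rintro f hf
  rw [hu] at hf
  obtain ⟨i, rfl⟩ := hf
  rw [Filter.eventually_atTop]
  refine ⟨i, fun n hn => ?_⟩
  have h1 : u i n ≤ (Finset.range (n+1)).sup (fun j => u j n) :=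
    Finset.le_sup (f := fun j => u j n) (Finset.mem_range.mpr (Nat.lt_succ_of_le hn))
  have h2 : g0 n ≤ (Finset.range (n+1)).sup g0 :=
    Finset.le_sup (f := g0) (Finset.mem_range.mpr (Nat.lt_succ_self n))
  have h3 : g n = (Finset.range (n+1)).sup g0 + n := rfl
  have h4 : g0 n = (Finset.range (n+1)).sup (fun j => u j n) + 1 := rfl
  omega

/-- two strictly monotone maps `ℕ → ℕ` with the same range coincide -/
lemma strictMono_range_inj : ∀ {f g : ℕ → ℕ}, StrictMono f → StrictMono g →
    Set.range f = Set.range g → f = g := by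
  have key : ∀ (f g : ℕ → ℕ), StrictMono f → StrictMono g → Set.range f = Set.range g →
      ∀ n, (∀ k, k < n → f k = g k) → g n ≤ f n := by
    intro f g hf hg hr n ih
    have : f n ∈ Set.range g := hr ▸ Set.mem_range_self n
    obtain ⟨k, hk⟩ := this
    rcases lt_or_ge k n with h | h
    · exfalso
      have : f n = f k := by rw [← hk, ← ih k h]
      exact absurd (hf.injective this) (by omega)
    · rw [← hk]; exact hg.monotone h
  intro f g hf hg hr
  funext n
  induction n using Nat.strong_induction_on with
  | _ n ih =>
    exact le_antisymm (key g f hg hf hr.symm n (fun k hk => (ih k hk).symm))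
      (key f g hf hg hr n ih)

/-- the index type for transfinite constructions of length ω₁ -/
noncomputable def Iw : Type := (Cardinal.aleph 1).ord.ToType

noncomputable instance : LinearOrder Iw := by unfold Iw; infer_instance
instance : WellFoundedLT Iw := by
  unfold Iw; infer_instance

lemma Iw_card : #Iw = Cardinal.aleph 1 := by
  unfold Iw
  rw [Cardinal.mk_toType, Cardinal.card_ord]

lemma Iw_Iio_countable (i : Iw) : (Set.Iio i).Countable := by
  rw [Cardinal.countable_iff_lt_aleph_one]
  exact Cardinal.mk_Iio_ord_toType i

noncomputable def scaleF (h : Iw → ℕ → ℕ) (i : Iw) (rec : ∀ j : Iw, j < i → (ℕ → ℕ)) :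
    ℕ → ℕ :=
  (domEx ({x | ∃ j, ∃ hj : j < i, rec j hj = x} ∪ {h i})
    (by
      refine Set.Countable.union ?_ (Set.countable_singleton _)
      have : Countable ↥(Set.Iio i) := (Iw_Iio_countable i).to_subtype
      have hsub : {x | ∃ j, ∃ hj : j < i, rec j hj = x} ⊆
          Set.range (fun j : ↥(Set.Iio i) => rec j.1 j.2) := by
        rintro x ⟨j, hj, rfl⟩
        exact ⟨⟨j, hj⟩, rfl⟩
      exact (Set.countable_range _).mono hsub)).choose

noncomputable def scaleFn (h : Iw → ℕ → ℕ) : Iw → ℕ → ℕ :=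
  (IsWellFounded.wf : WellFounded ((· < ·) : Iw → Iw → Prop)).fix (scaleF h)

lemma scaleFn_spec (h : Iw → ℕ → ℕ) (i : Iw) : StrictMono (scaleFn h i) ∧
    ∀ x ∈ ({x | ∃ j, ∃ hj : j < i, scaleFn h j = x} ∪ {h i}),
      ∀ᶠ n in atTop, x n < scaleFn h i n := by
  have hfix := (IsWellFounded.wf : WellFounded ((· < ·) : Iw → Iw → Prop)).fix_eq (scaleF h) i
  rw [show scaleFn h i = scaleF h i (fun j _ => scaleFn h j) from hfix]
  exact (domEx ({x | ∃ j, ∃ hj : j < i, scaleFn h j = x} ∪ {h i})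
    (by
      refine Set.Countable.union ?_ (Set.countable_singleton _)
      have : Countable ↥(Set.Iio i) := (Iw_Iio_countable i).to_subtype
      refine (Set.countable_range (fun j : ↥(Set.Iio i) => scaleFn h j.1)).mono ?_
      rintro x ⟨j, hj, rfl⟩
      exact ⟨⟨j, hj⟩, rfl⟩)).choose_spec

/-- construction of a `≤*`-increasing unbounded ω₁-scale of strictly monotone functions from an
unbounded family of size at most ℵ₁ -/
lemma exists_scale (F : Set (ℕ → ℕ)) (hcard : #F ≤ Cardinal.aleph 1)
    (hunb : ∀ g : ℕ → ℕ, ∃ f ∈ F, ¬ ∀ᶠ n in atTop, f n ≤ g n) :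
    ∃ sc : Iw → ℕ → ℕ, (∀ i, StrictMono (sc i)) ∧
      (∀ i j, i < j → ∀ᶠ n in atTop, sc i n < sc j n) ∧
      (∀ g : ℕ → ℕ, ∃ i, ¬ ∀ᶠ n in atTop, sc i n ≤ g n) := by
  classical
  have hFne : F.Nonempty := by
    obtain ⟨f, hf, -⟩ := hunb id
    exact ⟨f, hf⟩
  obtain ⟨f₀, hf₀⟩ := hFne
  have hemb : Nonempty (↥F ↪ Iw) := by
    rw [← Cardinal.le_def, Iw_card]
    exact hcard
  obtain ⟨e⟩ := hemb
  set h : Iw → (ℕ → ℕ) := fun i =>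
    if hh : ∃ f : ↥F, e f = i then (hh.choose : ℕ → ℕ) else f₀ with hhdef
  have hcov : ∀ f ∈ F, ∃ i, h i = f := by
    intro f hf
    refine ⟨e ⟨f, hf⟩, ?_⟩
    have hex : ∃ f' : ↥F, e f' = e ⟨f, hf⟩ := ⟨⟨f, hf⟩, rfl⟩
    rw [hhdef]
    simp only [hex, dif_pos]
    have : hex.choose = ⟨f, hf⟩ := e.injective hex.choose_spec
    rw [this]
  refine ⟨scaleFn h, fun i => (scaleFn_spec h i).1, ?_, ?_⟩
  · intro i j hij
    have := (scaleFn_spec h j).2 (scaleFn h i) (Or.inl ⟨i, hij, rfl⟩)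
    filter_upwards [this] with n hn using hn
  · intro g
    obtain ⟨f, hfF, hf⟩ := hunb g
    obtain ⟨i, hi⟩ := hcov f hfF
    refine ⟨i, fun hcon => hf ?_⟩
    have hdom := (scaleFn_spec h i).2 (h i) (Or.inr rfl)
    rw [hi] at hdom
    filter_upwards [hcon, hdom] with n h1 h2
    omega


lemma roth_of_hurewicz_setSMZ {X : Set ℝ} (hne : X.Nonempty)
    (hH : HurewiczProp ↥X) (hS : SetSMZ X) : RothbergerProp ↥X := by
  classical
  intro U hU
  obtain ⟨x₀, hx₀⟩ := hne
  have hUne : ∀ n, (U n).Nonempty := by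
    intro n
    have : (⟨x₀, hx₀⟩ : ↥X) ∈ ⋃₀ U n := (hU n).2 ▸ Set.mem_univ _
    obtain ⟨s, hs, -⟩ := this
    exact ⟨s, hs⟩
  -- lift the covers to open sets of ℝ
  have hlift : ∀ n (s : ↥(U n)), ∃ t : Set ℝ, IsOpen t ∧ Subtype.val ⁻¹' t = (s : Set ↥X) :=
    fun n s => exists_lift ((hU n).1 s s.2)
  choose hat hatOpen hatSpec using hlift
  set W : ℕ → Set ℝ := fun n => ⋃ s : ↥(U n), hat n s with hW
  have hWopen : ∀ n, IsOpen (W n) := fun n => isOpen_iUnion fun s => hatOpen n s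
  have hXW : ∀ n, X ⊆ W n := by
    intro n x hx
    have : (⟨x, hx⟩ : ↥X) ∈ ⋃₀ U n := (hU n).2 ▸ Set.mem_univ _
    obtain ⟨s, hs, hxs⟩ := this
    have : (⟨x, hx⟩ : ↥X) ∈ Subtype.val ⁻¹' hat n ⟨s, hs⟩ := by
      rw [hatSpec n ⟨s, hs⟩]; exact hxs
    exact Set.mem_iUnion.mpr ⟨⟨s, hs⟩, this⟩
  set G : ℕ → Set ℝ := fun n => ⋂ j ∈ Finset.Iic n, W j with hG
  have hGopen : ∀ n, IsOpen (G n) := fun n =>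
    isOpen_biInter_finset fun j _ => hWopen j
  have hXG : ∀ n, X ⊆ G n := fun n x hx =>
    Set.mem_biInter fun j _ => hXW j hx
  have hGW : ∀ n k, n ≤ k → G k ⊆ W n := fun n k hnk =>
    Set.biInter_subset_of_mem (Finset.mem_Iic.mpr hnk)
  -- the Hurewicz covers
  set C : ℕ → Set (Set ↥X) := fun n =>
    {s | ∃ c r, 0 < r ∧ Metric.closedBall c (2*r) ⊆ G n ∧
      s = Subtype.val ⁻¹' (Metric.ball c r)} with hC
  have hCprop : ∀ n, (∀ s ∈ C n, IsOpen s) ∧ ⋃₀ C n = Set.univ := by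
    intro n
    constructor
    · rintro s ⟨c, r, -, -, rfl⟩
      exact Metric.isOpen_ball.preimage continuous_subtype_val
    · apply Set.eq_univ_of_forall
      intro x
      have hx : (x : ℝ) ∈ G n := hXG n x.2
      obtain ⟨ρ, hρpos, hρ⟩ := Metric.isOpen_iff.mp (hGopen n) _ hx
      refine Set.mem_sUnion.mpr ⟨Subtype.val ⁻¹' (Metric.ball (x:ℝ) (ρ/5)),
        ⟨(x:ℝ), ρ/5, by linarith, ?_, rfl⟩, ?_⟩
      · refine (Metric.closedBall_subset_ball ?_).trans hρ
        linarith
      · exact Metric.mem_ball_self (by linarith)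
  obtain ⟨F, hFC, hFev⟩ := hH C hCprop
  -- witness data for members of the selected finite families
  have hCspec : ∀ n (s : ↥(C n)), ∃ c r, 0 < r ∧ Metric.closedBall c (2*r) ⊆ G n ∧
      (s : Set ↥X) = Subtype.val ⁻¹' (Metric.ball c r) := fun n s => s.2
  choose cc rr hrpos hcb hseq using hCspec
  -- the sigma-compact kernel
  set D : ℕ → Set ↥X := fun m => {x | ∀ k, m ≤ k → x ∈ ⋃₀ F k} with hD
  set Kset : ℕ → Set ℝ := fun m => closure (Subtype.val '' D m) with hK
  have hDB : ∀ m k, m ≤ k →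
      Subtype.val '' D m ⊆ ⋃ s : ↥(F k), Metric.closedBall (cc k ⟨s, (hFC k).1 s.2⟩)
        (2 * rr k ⟨s, (hFC k).1 s.2⟩) := by
    rintro m k hmk x ⟨y, hy, rfl⟩
    obtain ⟨s, hsF, hys⟩ := hy k hmk
    have hs' : s ∈ C k := (hFC k).1 hsF
    have hys' : y ∈ Subtype.val ⁻¹' Metric.ball (cc k ⟨s, hs'⟩) (rr k ⟨s, hs'⟩) := by
      have heq := hseq k ⟨s, hs'⟩
      exact heq ▸ hys
    refine Set.mem_iUnion.mpr ⟨⟨s, hsF⟩, ?_⟩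
    have : dist (y : ℝ) (cc k ⟨s, hs'⟩) < rr k ⟨s, hs'⟩ := by
      simpa [Metric.mem_ball] using hys' 
    exact Metric.mem_closedBall.mpr (by
      have h0 := hrpos k ⟨s, hs'⟩
      calc dist (y:ℝ) (cc k ⟨s, hs'⟩) ≤ rr k ⟨s, hs'⟩ := this.le
        _ ≤ 2 * rr k ⟨s, hs'⟩ := by linarith)
  have hBclosed : ∀ k, IsClosed (⋃ s : ↥(F k), Metric.closedBall (cc k ⟨s, (hFC k).1 s.2⟩)
      (2 * rr k ⟨s, (hFC k).1 s.2⟩)) := by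
    intro k
    have : Finite ↥(F k) := (hFC k).2.to_subtype
    exact isClosed_iUnion_of_finite fun s => Metric.isClosed_closedBall
  have hBcompact : ∀ k, IsCompact (⋃ s : ↥(F k), Metric.closedBall (cc k ⟨s, (hFC k).1 s.2⟩)
      (2 * rr k ⟨s, (hFC k).1 s.2⟩)) := by
    intro k
    have : Finite ↥(F k) := (hFC k).2.to_subtype
    exact isCompact_iUnion fun s => isCompact_closedBall _ _
  have hKB : ∀ m k, m ≤ k → Kset m ⊆ ⋃ s : ↥(F k), Metric.closedBall (cc k ⟨s, (hFC k).1 s.2⟩)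
      (2 * rr k ⟨s, (hFC k).1 s.2⟩) := fun m k hmk =>
    closure_minimal (hDB m k hmk) (hBclosed k)
  have hKcompact : ∀ m, IsCompact (Kset m) :=
    fun m => (hBcompact m).of_isClosed_subset isClosed_closure (hKB m m le_rfl)
  have hKG : ∀ m k, m ≤ k → Kset m ⊆ G k := by
    intro m k hmk
    refine (hKB m k hmk).trans ?_
    rintro x hx
    obtain ⟨s, hs⟩ := Set.mem_iUnion.mp hx
    exact hcb k ⟨s, (hFC k).1 s.2⟩ hs
  have hKW : ∀ m n, Kset m ⊆ W n := by
    intro m n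
    refine (hKG m (max m n) (le_max_left _ _)).trans (hGW n (max m n) (le_max_right _ _))
  -- Lebesgue numbers
  have hleb : ∀ m n, ∃ δ, 0 < δ ∧ ∀ y ∈ Kset m, ∃ s : ↥(U n), Metric.ball y δ ⊆ hat n s := by
    intro m n
    obtain ⟨δ, hδpos, hδ⟩ := lebesgue_number_lemma_of_metric (hKcompact m)
      (fun s : ↥(U n) => hatOpen n s) ((hKW m n).trans (by rw [hW]))
    exact ⟨δ, hδpos, hδ⟩
  choose δ hδpos hδ using hleb
  -- strong measure zero, block by block
  have hsmz : ∀ m, ∃ A : ℕ → Set ℝ, (X ⊆ ⋃ j, A j) ∧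
      ∀ j, EMetric.diam (A j) < ENNReal.ofReal (δ m (Nat.pair m j)) :=
    fun m => hS (fun j => δ m (Nat.pair m j)) (fun j => hδpos m _)
  choose AA hAcov hAdiam using hsmz
  set A : ℕ → Set ℝ := fun n => AA n.unpair.1 n.unpair.2 ∩ Kset n.unpair.1 with hA
  have hAdiam' : ∀ n, EMetric.diam (A n) < ENNReal.ofReal (δ n.unpair.1 n) := by
    intro n
    have h1 : EMetric.diam (A n) ≤ EMetric.diam (AA n.unpair.1 n.unpair.2) :=
      EMetric.diam_mono Set.inter_subset_left
    have h2 := hAdiam n.unpair.1 n.unpair.2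
    rw [Nat.pair_unpair] at h2
    exact h1.trans_lt h2
  -- the selection
  have hsel : ∀ n, ∃ t ∈ U n, ∀ x (hx : x ∈ X), x ∈ A n → (⟨x, hx⟩ : ↥X) ∈ t := by
    intro n
    by_cases hB : (A n).Nonempty
    · obtain ⟨y, hy⟩ := hB
      have hyK : y ∈ Kset n.unpair.1 := hy.2
      obtain ⟨s, hs⟩ := hδ n.unpair.1 n y hyK
      refine ⟨(s : Set ↥X), s.2, ?_⟩
      intro x hx hxA
      have hdist : dist x y < δ n.unpair.1 n := by
        have := EMetric.edist_le_diam_of_mem hxA hy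
        have hlt := this.trans_lt (hAdiam' n)
        exact edist_lt_ofReal.mp hlt
      have hxhat : x ∈ hat n s := hs (Metric.mem_ball.mpr hdist)
      have : (⟨x, hx⟩ : ↥X) ∈ Subtype.val ⁻¹' hat n s := hxhat
      rwa [hatSpec n s] at this
    · exact ⟨(hUne n).choose, (hUne n).choose_spec, fun x hx hxA => absurd ⟨x, hxA⟩ hB⟩
  choose f hfU hfprop using hsel
  refine ⟨f, hfU, ?_⟩
  apply Set.eq_univ_of_forall
  intro x
  obtain ⟨m, hm⟩ : ∃ m, x ∈ D m := by
    have := hFev x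
    rw [Filter.eventually_atTop] at this
    obtain ⟨m, hm⟩ := this
    exact ⟨m, fun k hk => hm k hk⟩
  have hxK : (x : ℝ) ∈ Kset m := subset_closure ⟨x, hm, rfl⟩
  obtain ⟨j, hj⟩ := Set.mem_iUnion.mp (hAcov m x.2)
  set n := Nat.pair m j with hn
  have hxA : (x : ℝ) ∈ A n := by
    constructor
    · rw [hn, Nat.unpair_pair]; exact hj
    · rw [hn, Nat.unpair_pair]; exact hxK
  have := hfprop n x x.2 hxA
  exact Set.mem_iUnion.mpr ⟨n, by simpa using this⟩


lemma conc_core (sc : Iw → ℕ → ℕ) (hmono : ∀ i, StrictMono (sc i))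
    (hlt : ∀ i j, i < j → ∀ᶠ n in atTop, sc i n < sc j n)
    (hscunb : ∀ g : ℕ → ℕ, ∃ i, ¬ ∀ᶠ n in atTop, sc i n ≤ g n)
    (G : Set ℝ) (hG : IsOpen G) (hD : ∀ s : Finset ℕ, E ↑s ∈ G) :
    {i : Iw | E (Set.range (sc i)) ∉ G}.Countable := by
  classical
  -- the "modulus" of each finite set
  have hmmEx : ∀ s : Finset ℕ, ∃ m : ℕ, (∀ j ∈ s, j < m) ∧
      ∀ S : Set ℕ, S ∩ Set.Iio m = ↑s ∩ Set.Iio m → E S ∈ G := by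
    intro s
    obtain ⟨ρ, hρpos, hball⟩ := Metric.isOpen_iff.mp hG _ (hD s)
    obtain ⟨m₀, hm₀⟩ := exists_pow_lt_of_lt_one hρpos (by norm_num : (1/3:ℝ) < 1)
    refine ⟨max m₀ (s.sup id + 1), ?_, ?_⟩
    · intro j hj
      have : j ≤ s.sup id := Finset.le_sup (f := id) hj
      have := le_max_right m₀ (s.sup id + 1)
      omega
    · intro S hS
      apply hball
      rw [Metric.mem_ball, Real.dist_eq]
      calc |E S - E ↑s| ≤ (1/3:ℝ)^(max m₀ (s.sup id + 1)) := E_approx hS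
        _ ≤ (1/3:ℝ)^m₀ :=
          pow_le_pow_of_le_one (by norm_num) (by norm_num) (le_max_left _ _)
        _ < ρ := hm₀
  choose mm hmm1 hmm2 using hmmEx
  -- the blocks
  set M : ℕ → ℕ := fun k =>
    Nat.rec (mm ∅ + 1) (fun _ Mk => Mk + 1 + (Finset.range Mk).powerset.sup mm) k with hM
  have hMsucc : ∀ k, M (k+1) = M k + 1 + (Finset.range (M k)).powerset.sup mm := fun k => rfl
  have hMmono : StrictMono M := by
    apply strictMono_nat_of_lt_succ
    intro n
    have := hMsucc n
    omega
  have hmmM : ∀ (k : ℕ) (s : Finset ℕ), (∀ j ∈ s, j < M k) → mm s < M (k+1) := by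
    intro k s hs
    have hmem : s ∈ (Finset.range (M k)).powerset :=
      Finset.mem_powerset.mpr (fun j hj => Finset.mem_range.mpr (hs j hj))
    have := Finset.le_sup (f := mm) hmem
    have := hMsucc k
    omega
  -- every set missing a block is captured
  have key : ∀ S : Set ℕ, E S ∉ G → ∀ k, (S ∩ Set.Ico (M k) (M (k+1))).Nonempty := by
    intro S hbad k
    by_contra hcon
    rw [Set.not_nonempty_iff_eq_empty] at hcon
    have hfin : (S ∩ Set.Iio (M k)).Finite := (Set.finite_Iio _).subset Set.inter_subset_right
    set s : Finset ℕ := hfin.toFinset with hsdef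
    have hscoe : (↑s : Set ℕ) = S ∩ Set.Iio (M k) := Set.Finite.coe_toFinset hfin
    have hsbound : ∀ j ∈ s, j < M k := by
      intro j hj
      have : j ∈ S ∩ Set.Iio (M k) := hscoe ▸ Finset.mem_coe.mpr hj
      exact this.2
    have hmmlt : mm s < M (k+1) := hmmM k s hsbound
    apply hbad
    apply hmm2 s
    ext x
    simp only [Set.mem_inter_iff, Set.mem_Iio]
    constructor
    · rintro ⟨hxS, hxlt⟩
      rcases lt_or_ge x (M k) with h | h
      · exact ⟨by rw [hscoe]; exact ⟨hxS, h⟩, hxlt⟩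
      · exfalso
        have : x ∈ S ∩ Set.Ico (M k) (M (k+1)) := ⟨hxS, h, by omega⟩
        rw [hcon] at this
        exact this
    · rintro ⟨hxs, hxlt⟩
      have : x ∈ S ∩ Set.Iio (M k) := hscoe ▸ hxs
      exact ⟨this.1, hxlt⟩
  -- bad indices are dominated by M ∘ succ
  have hdom : ∀ i : Iw, E (Set.range (sc i)) ∉ G → ∀ k, sc i k < M (k+1) := by
    intro i hbad k
    have hx : ∀ k, ∃ x, x ∈ Set.range (sc i) ∧ M k ≤ x ∧ x < M (k+1) := by
      intro k
      obtain ⟨x, hx1, hx2⟩ := key _ hbad k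
      exact ⟨x, hx1, hx2.1, hx2.2⟩
    choose x hxS hxlb hxub using hx
    have hxmono : StrictMono x := by
      intro a b hab
      calc x a < M (a+1) := hxub a
        _ ≤ M b := hMmono.monotone hab
        _ ≤ x b := hxlb b
    by_contra hcon
    push_neg at hcon
    have hsub : (Finset.range (k+1)).image x ⊆ (Finset.range k).image (sc i) := by
      intro a ha
      obtain ⟨t, ht, rfl⟩ := Finset.mem_image.mp ha
      rw [Finset.mem_range] at ht
      obtain ⟨j, hj⟩ := hxS t
      have hlt : x t < sc i k := by
        calc x t < M (t+1) := hxub t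
          _ ≤ M (k+1) := hMmono.monotone (Nat.succ_le_succ (Nat.lt_succ_iff.mp ht))
          _ ≤ sc i k := hcon
      rw [← hj] at hlt ⊢
      have : j < k := by
        by_contra hjk
        exact absurd (((hmono i).monotone (not_lt.mp hjk)).trans_lt hlt) (lt_irrefl _)
      exact Finset.mem_image.mpr ⟨j, Finset.mem_range.mpr this, rfl⟩
    have hcard1 : ((Finset.range (k+1)).image x).card = k + 1 := by
      rw [Finset.card_image_of_injective _ hxmono.injective, Finset.card_range]
    have hcard2 : ((Finset.range k).image (sc i)).card ≤ k :=
      (Finset.card_image_le).trans (le_of_eq (Finset.card_range k))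
    have := Finset.card_le_card hsub
    omega
  -- conclusion: the bad set is countable
  set A' : Set Iw := {i | ∀ᶠ n in atTop, sc i n ≤ M (n+1)} with hA'
  have hBadA' : {i : Iw | E (Set.range (sc i)) ∉ G} ⊆ A' := by
    intro i hi
    exact Filter.Eventually.of_forall (fun n => (hdom i hi n).le)
  refine Set.Countable.mono hBadA' ?_
  by_cases hbnd : ∃ j : Iw, ∀ i ∈ A', i < j
  · obtain ⟨j, hj⟩ := hbnd
    exact (Iw_Iio_countable j).mono (fun i hi => hj i hi)
  · exfalso
    push_neg at hbnd
    obtain ⟨j₀, hj₀⟩ := hscunb (fun n => M (n+1))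
    apply hj₀
    obtain ⟨i, hiA', hji⟩ := hbnd j₀
    rcases eq_or_lt_of_le hji with rfl | hlt'
    · exact hiA'
    · have h1 := hlt j₀ i hlt'
      filter_upwards [h1, hiA'] with n hn1 hn2
      omega


/-- the concentrated set built from a scale -/
noncomputable def concSet (sc : Iw → ℕ → ℕ) : Set ℝ :=
  (Set.range fun s : Finset ℕ => E ↑s) ∪ (Set.range fun i : Iw => E (Set.range (sc i)))

lemma concSet_uncountable (sc : Iw → ℕ → ℕ) (hmono : ∀ i, StrictMono (sc i))
    (hlt : ∀ i j, i < j → ∀ᶠ n in atTop, sc i n < sc j n) : ¬ (concSet sc).Countable := by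
  have hinj : Function.Injective (fun i : Iw => E (Set.range (sc i))) := by
    intro i j heq
    have hre : Set.range (sc i) = Set.range (sc j) := E_injective heq
    have hfe : sc i = sc j := strictMono_range_inj (hmono i) (hmono j) hre
    by_contra hne
    rcases lt_or_gt_of_ne hne with h | h
    · obtain ⟨n, hn⟩ := (hlt i j h).exists
      rw [hfe] at hn
      exact lt_irrefl _ hn
    · obtain ⟨n, hn⟩ := (hlt j i h).exists
      rw [hfe] at hn
      exact lt_irrefl _ hn
  intro hc
  have h1 : (Set.range fun i : Iw => E (Set.range (sc i))).Countable :=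
    hc.mono Set.subset_union_right
  have h2 : #(Set.range fun i : Iw => E (Set.range (sc i))) = #Iw :=
    Cardinal.mk_range_eq _ hinj
  rw [Iw_card] at h2
  have h3 : #(Set.range fun i : Iw => E (Set.range (sc i))) ≤ ℵ₀ :=
    Cardinal.mk_le_aleph0_iff.mpr h1.to_subtype
  rw [h2] at h3
  exact absurd h3 (not_le.mpr Cardinal.aleph0_lt_aleph_one)

lemma roth_concSet (sc : Iw → ℕ → ℕ) (hmono : ∀ i, StrictMono (sc i))
    (hlt : ∀ i j, i < j → ∀ᶠ n in atTop, sc i n < sc j n)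
    (hscunb : ∀ g : ℕ → ℕ, ∃ i, ¬ ∀ᶠ n in atTop, sc i n ≤ g n) :
    RothbergerProp ↥(concSet sc) := by
  classical
  intro U hU
  -- enumeration of the countable core
  set q : ℕ → Finset ℕ := fun k => (Denumerable.eqv (Finset ℕ)).symm k with hq
  have hqsurj : Function.Surjective q := (Denumerable.eqv (Finset ℕ)).symm.surjective
  set dd : ℕ → ↥(concSet sc) := fun k => ⟨E ↑(q k), Or.inl ⟨q k, rfl⟩⟩ with hdd
  have heven : ∀ k, ∃ t ∈ U (2*k), dd k ∈ t := by
    intro k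
    have : dd k ∈ ⋃₀ U (2*k) := (hU (2*k)).2 ▸ Set.mem_univ _
    exact this
  choose t₁ ht₁U ht₁ using heven
  have hliftev : ∀ k, ∃ T : Set ℝ, IsOpen T ∧ Subtype.val ⁻¹' T = t₁ k :=
    fun k => exists_lift ((hU (2*k)).1 _ (ht₁U k))
  choose T hTopen hTspec using hliftev
  set G₀ : Set ℝ := ⋃ k, T k with hG₀
  have hG₀open : IsOpen G₀ := isOpen_iUnion hTopen
  have hDG : ∀ s : Finset ℕ, E ↑s ∈ G₀ := by
    intro s
    obtain ⟨k, hk⟩ := hqsurj s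
    have h2 : dd k ∈ t₁ k := ht₁ _
    rw [← hTspec _] at h2
    have h3 : (dd k : ℝ) ∈ T k := h2
    have h4 : (dd k : ℝ) = E ↑s := by rw [hdd]; simp [hk]
    rw [h4] at h3
    exact Set.mem_iUnion.mpr ⟨k, h3⟩
  have hBad := conc_core sc hmono hlt hscunb G₀ hG₀open hDG
  -- the remainder is countable
  set R : Set ↥(concSet sc) := {y : ↥(concSet sc) | (y : ℝ) ∉ G₀} with hR
  have hRc : R.Countable := by
    have : Countable ↥{i : Iw | E (Set.range (sc i)) ∉ G₀} := hBad.to_subtype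
    have hsub : R ⊆ Set.range (fun p : ↥{i : Iw | E (Set.range (sc i)) ∉ G₀} =>
        (⟨E (Set.range (sc p.1)), Or.inr ⟨p.1, rfl⟩⟩ : ↥(concSet sc))) := by
      intro y hy
      rcases y.2 with h | h
      · obtain ⟨s, hs⟩ := h
        exact absurd (hs ▸ hDG s) hy
      · obtain ⟨i, hi⟩ := h
        have hi' : E (Set.range (sc i)) = ↑y := hi
        have hiBad : i ∈ {i : Iw | E (Set.range (sc i)) ∉ G₀} := by
          rw [Set.mem_setOf_eq, hi']
          exact hy
        exact ⟨⟨i, hiBad⟩, Subtype.ext hi'⟩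
    exact (Set.countable_range _).mono hsub
  have hXne : Nonempty ↥(concSet sc) := ⟨dd 0⟩
  obtain ⟨rr, hrr⟩ := countable_sub_range hRc
  have hodd : ∀ k, ∃ t ∈ U (2*k+1), rr k ∈ t := by
    intro k
    have : rr k ∈ ⋃₀ U (2*k+1) := (hU (2*k+1)).2 ▸ Set.mem_univ _
    exact this
  choose t₂ ht₂U ht₂ using hodd
  set f : ℕ → Set ↥(concSet sc) := fun n => if n % 2 = 0 then t₁ (n/2) else t₂ (n/2) with hf
  have hfeven : ∀ k, f (2*k) = t₁ k := by
    intro k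
    have h1 : (2*k) % 2 = 0 := by omega
    have h2 : (2*k)/2 = k := by omega
    show (if (2*k) % 2 = 0 then t₁ ((2*k)/2) else t₂ ((2*k)/2)) = t₁ k
    rw [if_pos h1, h2]
  have hfodd : ∀ k, f (2*k+1) = t₂ k := by
    intro k
    have h1 : ¬ ((2*k+1) % 2 = 0) := by omega
    have h2 : (2*k+1)/2 = k := by omega
    show (if (2*k+1) % 2 = 0 then t₁ ((2*k+1)/2) else t₂ ((2*k+1)/2)) = t₂ k
    rw [if_neg h1, h2]
  refine ⟨f, ?_, ?_⟩
  · intro n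
    by_cases h : n % 2 = 0
    · obtain ⟨k, rfl⟩ : ∃ k, n = 2*k := ⟨n/2, by omega⟩
      rw [hfeven k]
      exact ht₁U k
    · obtain ⟨k, rfl⟩ : ∃ k, n = 2*k+1 := ⟨n/2, by omega⟩
      rw [hfodd k]
      exact ht₂U k
  · apply Set.eq_univ_of_forall
    intro x
    by_cases hx : (x : ℝ) ∈ G₀
    · obtain ⟨k, hk⟩ := Set.mem_iUnion.mp hx
      have : x ∈ t₁ k := by rw [← hTspec k]; exact hk
      exact Set.mem_iUnion.mpr ⟨2*k, (hfeven k).symm ▸ this⟩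
    · have hxR : x ∈ R := hx
      obtain ⟨k, hk⟩ := hrr hxR
      have : x ∈ t₂ k := by rw [← hk]; exact ht₂ k
      exact Set.mem_iUnion.mpr ⟨2*k+1, (hfodd k).symm ▸ this⟩


end BC13

/-- every Rothberger set of reals is countable iff every SMZ set of reals is countable. -/
theorem bc_rothberger_iff_bc_smz :
    (∀ X : Set ℝ, RothbergerProp ↥X → X.Countable) ↔
      (∀ X : Set ℝ, StrongMeasureZero ↥X → X.Countable) := by
  constructor
  · -- if all Rothberger sets are countable, then all SMZ sets are countable
    intro hR X hXsmz
    by_contra hXc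
    have hX1 : Cardinal.aleph 1 ≤ #↥X := by
      rw [← not_lt]
      intro h
      exact hXc ((Cardinal.countable_iff_lt_aleph_one X).mpr h)
    obtain ⟨Y, hYX, hYcard⟩ := Cardinal.le_mk_iff_exists_subset.mp hX1
    have hYsmz : BC13.SetSMZ Y := BC13.setSMZ_mono (BC13.setSMZ_of_smz hXsmz) hYX
    have hYnc : ¬ Y.Countable := by
      rw [Cardinal.countable_iff_lt_aleph_one, hYcard]
      exact lt_irrefl _
    have hYne : Y.Nonempty := by
      rcases Set.eq_empty_or_nonempty Y with rfl | h
      · exact absurd Set.countable_empty hYnc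
      · exact h
    by_cases hP : ∀ Fam : Set (ℕ → ℕ), #Fam ≤ Cardinal.aleph 1 →
        ∃ g : ℕ → ℕ, ∀ f ∈ Fam, ∀ᶠ n in atTop, f n ≤ g n
    · -- the bounding number exceeds ℵ₁ : Y is Hurewicz, hence Rothberger
      have hH : HurewiczProp ↥Y := by
        apply BC13.hurewicz_of_dominated
        intro gf
        obtain ⟨g, hg⟩ := hP (Set.range gf) (by
          calc #(Set.range gf) ≤ #↥Y := Cardinal.mk_range_le
            _ = Cardinal.aleph 1 := hYcard)
        exact ⟨g, fun y => hg (gf y) (Set.mem_range_self y)⟩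
      exact hYnc (hR Y (BC13.roth_of_hurewicz_setSMZ hYne hH hYsmz))
    · -- the bounding number is ℵ₁ : there is an uncountable concentrated (hence Rothberger) set
      push_neg at hP
      obtain ⟨Fam, hFcard, hFunb⟩ := hP
      obtain ⟨sc, h1, h2, h3⟩ := BC13.exists_scale Fam hFcard (fun g => by
        obtain ⟨f, hf, hfg⟩ := hFunb g
        exact ⟨f, hf, Filter.not_eventually.mpr (hfg.mono fun n hn => not_le.mpr hn)⟩)
      have := hR (BC13.concSet sc) (BC13.roth_concSet sc h1 h2 h3)
      exact BC13.concSet_uncountable sc h1 h2 this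
  · -- Rothberger implies SMZ
    intro hS X hXroth
    exact hS X (BC13.smz_of_rothberger hXroth)
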